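/- Let F be a field of characteristic different from 2 and n ≥ 1. The center of the symplectic group Sp_{2n}(F) is {I_{2n}, −I_{2n}}; that is, a matrix A ∈ Sp_{2n}(F) satisfies A·B = B·A for every B ∈ Sp_{2n}(F) if and only if A = I_{2n} or A = −I_{2n}. -/

import Mathlib

open Matrix

/-- The `d × d` exchange matrix `Ω_d`: entry 1 exactly when (1-based) `i + j = d + 1`. -/
def omegaMat (F : Type*) [CommRing F] (d : ℕ) : Matrix (Fin d) (Fin d) F :=
  fun i j => if (i : ℕ) + (j : ℕ) + 1 = d then 1 else 0

/-- `SO_d(F)`: the set of `d × d` matrices with `A · Ω_d · Aᵀ = Ω_d` and `det A = 1`. -/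
def SOset (F : Type*) [CommRing F] (d : ℕ) : Set (Matrix (Fin d) (Fin d) F) :=
  {A | A * omegaMat F d * Aᵀ = omegaMat F d ∧ A.det = 1}

/-- `Ψ_{2n} = [[0, Ω_n], [−Ω_n, 0]]`. -/
def PsiMat (F : Type*) [CommRing F] (n : ℕ) : Matrix (Fin (2*n)) (Fin (2*n)) F :=
  fun i j => if (i : ℕ) + (j : ℕ) + 1 = 2*n then (if (i : ℕ) < n then 1 else -1) else 0

/-- `Sp_{2n}(F)`: the set of `2n × 2n` matrices with `A · Ψ_{2n} · Aᵀ = Ψ_{2n}`. -/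
def SpSet (F : Type*) [CommRing F] (n : ℕ) : Set (Matrix (Fin (2*n)) (Fin (2*n)) F) :=
  {A | A * PsiMat F n * Aᵀ = PsiMat F n}

/-- Kronecker product, regarded as an `(nm) × (nm)` matrix via the lexicographic
identification sending the (1-based) pair `(i,k)` to `m(i−1)+k`. -/
def kron {F : Type*} [CommRing F] {n m : ℕ} (A : Matrix (Fin n) (Fin n) F)
    (B : Matrix (Fin m) (Fin m) F) : Matrix (Fin (n*m)) (Fin (n*m)) F :=
  Matrix.reindex finProdFinEquiv finProdFinEquiv (Matrix.kroneckerMap (· * ·) A B)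

/-- 1-based matrix unit `E_{i,j}` in `M_d(F)`. -/
def Eunit (F : Type*) [CommRing F] (d : ℕ) (i j : ℕ) : Matrix (Fin d) (Fin d) F :=
  fun p q => if (p : ℕ) + 1 = i ∧ (q : ℕ) + 1 = j then 1 else 0

section Aux

variable {F : Type*} [Field F] {n : ℕ}

lemma psiT : (PsiMat F n)ᵀ = -(PsiMat F n) := by
  ext i j
  have hi := i.isLt; have hj := j.isLt
  simp only [transpose_apply, Matrix.neg_apply, PsiMat]
  split_ifs <;> first | omega | ring

lemma psi_sq : PsiMat F n * PsiMat F n = (-1 : Matrix (Fin (2*n)) (Fin (2*n)) F) := by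
  ext i j
  have hi := i.isLt; have hj := j.isLt
  rw [mul_apply, Finset.sum_eq_single (⟨2*n-1-(i:ℕ), by omega⟩ : Fin (2*n))]
  · simp only [PsiMat, Matrix.neg_apply, Matrix.one_apply]
    by_cases hij : i = j
    · subst hij
      rw [if_pos rfl]
      split_ifs <;> first | omega | ring
    · have hij' : (i:ℕ) ≠ (j:ℕ) := fun h => hij (Fin.ext h)
      rw [if_neg hij]
      split_ifs <;> first | omega | ring
  · intro b _ hb
    have hne : ¬((i:ℕ) + (b:ℕ) + 1 = 2*n) := fun h => hb (Fin.ext (by simp; omega))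
    simp [PsiMat, hne]
  · intro h; exact absurd (Finset.mem_univ _) h

lemma mul_vvt (A : Matrix (Fin (2*n)) (Fin (2*n)) F) (v w : Fin (2*n) → F) :
    A * vecMulVec v w = vecMulVec (A *ᵥ v) w := by
  ext i j
  simp only [mul_apply, vecMulVec_apply, mulVec, dotProduct]
  rw [Finset.sum_mul]
  exact Finset.sum_congr rfl fun k _ => by ring

lemma vvt_mul (C : Matrix (Fin (2*n)) (Fin (2*n)) F) (v w : Fin (2*n) → F) :
    vecMulVec v w * C = vecMulVec v (w ᵥ* C) := by
  ext i j
  simp only [mul_apply, vecMulVec_apply, vecMul, dotProduct]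
  rw [Finset.mul_sum]
  exact Finset.sum_congr rfl fun k _ => by ring

lemma vvt_vvt (v w x y : Fin (2*n) → F) :
    vecMulVec v w * vecMulVec x y = (w ⬝ᵥ x) • vecMulVec v y := by
  ext i j
  simp only [mul_apply, vecMulVec_apply, Matrix.smul_apply, dotProduct, smul_eq_mul,
    Finset.sum_mul]
  exact Finset.sum_congr rfl fun k _ => by ring

lemma skew_zero (hchar : ringChar F ≠ 2) (v : Fin (2*n) → F) :
    (v ᵥ* PsiMat F n) ⬝ᵥ v = 0 := by
  have h1 : v ᵥ* PsiMat F n = -(PsiMat F n *ᵥ v) := by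
    rw [← Matrix.mulVec_transpose, psiT, Matrix.neg_mulVec]
  have h2 : (v ᵥ* PsiMat F n) ⬝ᵥ v = -((v ᵥ* PsiMat F n) ⬝ᵥ v) := by
    conv_lhs => rw [h1]
    rw [neg_dotProduct, dotProduct_comm, Matrix.dotProduct_mulVec]
  have h2' := Ring.two_ne_zero hchar (R := F)
  have h3 : (2 : F) * ((v ᵥ* PsiMat F n) ⬝ᵥ v) = 0 := by
    rw [two_mul]; linear_combination h2
  rcases mul_eq_zero.mp h3 with h | h
  · exact absurd h h2'
  · exact h

lemma transvection_mem (hchar : ringChar F ≠ 2) (v : Fin (2*n) → F) :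
    (1 + vecMulVec v v * PsiMat F n) ∈ SpSet F n := by
  have hVT : (vecMulVec v v)ᵀ = vecMulVec v v := by
    ext i j; simp [vecMulVec_apply, mul_comm]
  have hΨΨ : PsiMat F n * PsiMat F n = -1 := psi_sq
  have hVΨV : vecMulVec v v * PsiMat F n * vecMulVec v v = 0 := by
    rw [vvt_mul, vvt_vvt, skew_zero hchar, zero_smul]
  set Ψ := PsiMat F n
  set V := vecMulVec v v
  have hMT : (1 + V * Ψ)ᵀ = 1 + -Ψ * V := by
    rw [transpose_add, transpose_one, transpose_mul, psiT, hVT]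
  show (1 + V * Ψ) * Ψ * (1 + V * Ψ)ᵀ = Ψ
  rw [hMT]
  have expand : (1 + V*Ψ) * Ψ * (1 + -Ψ*V)
      = Ψ + V*(Ψ*Ψ) - (Ψ*Ψ)*V - V*((Ψ*Ψ)*(Ψ*V)) := by noncomm_ring
  rw [expand, hΨΨ]
  have e1 : V * ((-1 : Matrix (Fin (2*n)) (Fin (2*n)) F) * (Ψ*V)) = -(V*Ψ*V) := by
    noncomm_ring
  rw [e1, hVΨV]
  noncomm_ring

end Aux

/-- over a field of characteristic ≠ 2, the center of `Sp_{2n}(F)` is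
`{I, −I}`: an element `A ∈ Sp_{2n}(F)` commutes with every element of `Sp_{2n}(F)` if
and only if `A = I` or `A = −I`. -/
theorem sp_center (F : Type*) [Field F] (hchar : ringChar F ≠ 2)
    (n : ℕ) (hn : 1 ≤ n)
    (A : Matrix (Fin (2*n)) (Fin (2*n)) F) (hA : A ∈ SpSet F n) :
    (∀ B ∈ SpSet F n, A * B = B * A) ↔ A = 1 ∨ A = -1 := by
  constructor
  · intro hcomm
    have hΨΨ : PsiMat F n * PsiMat F n = -1 := psi_sq
    set Ψ := PsiMat F n with hΨdef
    set C : Matrix (Fin (2*n)) (Fin (2*n)) F := -(Ψ * A * Ψ) with hC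
    have key : ∀ v : Fin (2*n) → F, ∀ i j, (A *ᵥ v) i * v j = v i * (v ᵥ* C) j := by
      intro v i j
      have hB := hcomm _ (transvection_mem hchar v)
      rw [mul_add, add_mul, mul_one, one_mul] at hB
      have h1 : A * (vecMulVec v v * Ψ) = vecMulVec v v * Ψ * A := add_left_cancel hB
      have hneg : -(A * vecMulVec v v) = -(vecMulVec v v * C) := by
        calc -(A * vecMulVec v v) = A * (vecMulVec v v * (Ψ*Ψ)) := by
              rw [hΨΨ]; noncomm_ring
          _ = A * (vecMulVec v v * Ψ) * Ψ := by noncomm_ring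
          _ = vecMulVec v v * Ψ * A * Ψ := by rw [h1]
          _ = vecMulVec v v * (Ψ * A * Ψ) := by noncomm_ring
          _ = -(vecMulVec v v * C) := by rw [hC]; noncomm_ring
      have h2 : A * vecMulVec v v = vecMulVec v v * C := neg_injective hneg
      rw [mul_vvt, vvt_mul] at h2
      have := congrFun (congrFun h2 i) j
      simpa [vecMulVec_apply] using this
    have hdiag : ∀ i k : Fin (2*n), i ≠ k → A i k = 0 := by
      intro i k hik
      have h := key (Pi.single k 1) i k
      simpa [Pi.single_apply, hik] using h
    have hCoff : ∀ k j : Fin (2*n), j ≠ k → C k j = 0 := by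
      intro k j hjk
      have h := key (Pi.single k 1) k j
      simpa [Pi.single_apply, hjk] using h.symm
    have hCk : ∀ k : Fin (2*n), C k k = A k k := by
      intro k
      have h := key (Pi.single k 1) k k
      simpa [Pi.single_apply] using h.symm
    have hsame : ∀ k l : Fin (2*n), A k k = A l l := by
      intro k l
      by_cases hkl : k = l
      · rw [hkl]
      have h := key (Pi.single k 1 + Pi.single l 1) k l
      have hlk : l ≠ k := fun h' => hkl h'.symm
      rw [Matrix.mulVec_add, Matrix.add_vecMul] at h
      simp [Pi.single_apply, hkl, hlk] at h
      rw [hdiag k l hkl, hCoff k l hlk, hCk l] at h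
      simpa using h
    set lam := A ⟨0, by omega⟩ ⟨0, by omega⟩ with hlam
    have hAeq : A = lam • (1 : Matrix (Fin (2*n)) (Fin (2*n)) F) := by
      ext i j
      by_cases hij : i = j
      · subst hij
        simp [Matrix.one_apply, hlam, hsame i ⟨0, by omega⟩]
      · simp [hdiag i j hij, Matrix.one_apply, hij]
    have hA' : A * Ψ * Aᵀ = Ψ := hA
    rw [hAeq] at hA'
    have hsc : (lam * lam) • Ψ = Ψ := by
      calc (lam * lam) • Ψ = (lam • 1) * Ψ * (lam • (1:Matrix (Fin (2*n)) (Fin (2*n)) F))ᵀ := by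
            rw [transpose_smul, transpose_one]
            simp [Matrix.smul_mul, Matrix.mul_smul, smul_smul]
        _ = Ψ := hA'
    have hΨentry : Ψ ⟨0, by omega⟩ ⟨2*n-1, by omega⟩ = (1 : F) := by
      show (if 0 + (2*n-1) + 1 = 2*n then (if 0 < n then (1:F) else -1) else 0) = 1
      rw [if_pos (by omega), if_pos (by omega)]
    have hev := congrFun (congrFun hsc ⟨0, by omega⟩) ⟨2*n-1, by omega⟩
    rw [Matrix.smul_apply, hΨentry, smul_eq_mul, mul_one] at hev
    have hfac : (lam - 1) * (lam + 1) = 0 := by ring_nf; linear_combination hev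
    rcases mul_eq_zero.mp hfac with h | h
    · left
      rw [hAeq, show lam = 1 from by linear_combination h, one_smul]
    · right
      rw [hAeq, show lam = -1 from by linear_combination h]
      simp
  · rintro (rfl | rfl) B hB
    · rw [one_mul, mul_one]
    · simp
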